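/- The Farey expansion Gauss map F, defined by F(x) = −1/x − 2 for x ∈ [−1, 0), F(0) = 0, and F(x) = 1/x − 1 for x ∈ (0, ∞), preserves the measure with density 1/((x+1)(x+2)) on [−1, ∞); that is, for every Borel set A ⊆ [−1, ∞), ∫_{F⁻¹(A)} dx/((x+1)(x+2)) = ∫_A dx/((x+1)(x+2)). -/

import Mathlib

open MeasureTheory
open scoped ENNReal

/-- The Farey expansion Gauss map on [-1,∞). -/
noncomputable def fareyGaussMap (x : ℝ) : ℝ :=
  if x < 0 then -1 / x - 2 else if x = 0 then 0 else 1 / x - 1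

theorem farey_lintegral_image {s : Set ℝ} {f f' : ℝ → ℝ}
    (hs : MeasurableSet s) (hf' : ∀ x ∈ s, HasDerivWithinAt f (f' x) s x)
    (hf : Set.InjOn f s) (g : ℝ → ℝ≥0∞) :
    ∫⁻ x in f '' s, g x = ∫⁻ x in s, ENNReal.ofReal |f' x| * g (f x) := by
  simpa only [ContinuousLinearMap.det_toSpanSingleton] using
    MeasureTheory.lintegral_image_eq_lintegral_abs_det_fderiv_mul MeasureTheory.volume hs
      (fun x hx => (hf' x hx).hasFDerivWithinAt) hf g

theorem farey_measurable : Measurable fareyGaussMap := by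
  unfold fareyGaussMap
  apply Measurable.ite (measurableSet_lt measurable_id measurable_const)
  · exact (measurable_const.div measurable_id).sub measurable_const
  · apply Measurable.ite (measurableSet_eq_fun measurable_id measurable_const)
      measurable_const
    exact (measurable_const.div measurable_id).sub measurable_const

/-- The Farey expansion Gauss map preserves the measure with density
1/((x+1)(x+2)) on [-1,∞). -/
theorem fareyGaussMap_invariant_measure :
    ∀ A : Set ℝ, MeasurableSet A → A ⊆ Set.Ici (-1 : ℝ) →
      ∫⁻ x in fareyGaussMap ⁻¹' A ∩ Set.Ici (-1 : ℝ),
        ENNReal.ofReal (1 / ((x + 1) * (x + 2))) =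
      ∫⁻ x in A, ENNReal.ofReal (1 / ((x + 1) * (x + 2))) := by
  intro A hA hAsub
  set h : ℝ → ℝ≥0∞ := fun x => ENNReal.ofReal (1 / ((x + 1) * (x + 2))) with hh
  set S : Set ℝ := fareyGaussMap ⁻¹' A ∩ Set.Ici (-1 : ℝ) with hS
  have hSm : MeasurableSet S := (farey_measurable hA).inter measurableSet_Ici
  set A' : Set ℝ := A ∩ Set.Ioi (-1 : ℝ) with hA'
  have hA'm : MeasurableSet A' := hA.inter measurableSet_Ioi
  set φ₁ : ℝ → ℝ := fun y => (y + 1)⁻¹ with hφ₁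
  set φ₂ : ℝ → ℝ := fun y => -(y + 2)⁻¹ with hφ₂
  -- branch identifications
  have hB2 : S ∩ Set.Iio 0 = φ₂ '' A := by
    ext x
    simp only [hS, Set.mem_inter_iff, Set.mem_preimage, Set.mem_Ici, Set.mem_Iio,
      Set.mem_image]
    constructor
    · rintro ⟨⟨hxA, hx1⟩, hx0⟩
      refine ⟨fareyGaussMap x, hxA, ?_⟩
      have hxne : x ≠ 0 := ne_of_lt hx0
      simp only [hφ₂, fareyGaussMap, if_pos hx0]
      have : -1 / x - 2 + 2 = -1 / x := by ring
      rw [this]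
      field_simp
    · rintro ⟨y, hyA, rfl⟩
      have hy1 : (-1 : ℝ) ≤ y := hAsub hyA
      have hy2 : (0 : ℝ) < y + 2 := by linarith
      have hx0 : φ₂ y < 0 := by
        simp only [hφ₂]
        simp only [neg_lt, neg_zero]
        positivity
      have hFx : fareyGaussMap (φ₂ y) = y := by
        rw [fareyGaussMap.eq_def, if_pos hx0]
        simp only [hφ₂]
        rw [neg_div_neg_eq, one_div, inv_inv]
        ring
      refine ⟨⟨by rw [hFx]; exact hyA, ?_⟩, hx0⟩
      simp only [hφ₂]
      rw [neg_le, neg_neg, inv_le_one_iff₀]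
      right; linarith
  have hB1 : S ∩ Set.Ioi 0 = φ₁ '' A' := by
    ext x
    simp only [hS, hA', Set.mem_inter_iff, Set.mem_preimage, Set.mem_Ici, Set.mem_Ioi,
      Set.mem_image]
    constructor
    · rintro ⟨⟨hxA, hx1⟩, hx0⟩
      have hxne : x ≠ 0 := ne_of_gt hx0
      have hxlt : ¬ x < 0 := not_lt.mpr (le_of_lt hx0)
      have hF : fareyGaussMap x = 1 / x - 1 := by
        simp [fareyGaussMap, hxlt, hxne]
      refine ⟨fareyGaussMap x, ⟨hxA, ?_⟩, ?_⟩
      · rw [hF]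
        have : 0 < 1 / x := by positivity
        linarith
      · rw [hF]
        simp only [hφ₁]
        have : 1 / x - 1 + 1 = 1 / x := by ring
        rw [this, one_div, inv_inv]
    · rintro ⟨y, ⟨hyA, hy1⟩, rfl⟩
      have hy1' : (0 : ℝ) < y + 1 := by linarith
      have hx0 : 0 < φ₁ y := by simp only [hφ₁]; positivity
      have hxne : φ₁ y ≠ 0 := ne_of_gt hx0
      have hxlt : ¬ φ₁ y < 0 := not_lt.mpr (le_of_lt hx0)
      have hFx : fareyGaussMap (φ₁ y) = y := by
        rw [fareyGaussMap.eq_def, if_neg hxlt, if_neg hxne]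
        simp only [hφ₁]
        rw [one_div, inv_inv]
        ring
      exact ⟨⟨by rw [hFx]; exact hyA, le_of_lt (lt_of_lt_of_le (by norm_num) hx0.le)⟩, hx0⟩
  -- split S
  have hsplit : S = (S ∩ Set.Iio 0) ∪ (S ∩ Set.Ici 0) := by
    rw [← Set.inter_union_distrib_left, Set.Iio_union_Ici, Set.inter_univ]
  have hIciIoi : (S ∩ Set.Ici (0:ℝ) : Set ℝ) =ᵐ[volume] (S ∩ Set.Ioi (0:ℝ) : Set ℝ) :=
    MeasureTheory.ae_eq_set_inter (MeasureTheory.ae_eq_refl _) MeasureTheory.Ioi_ae_eq_Ici.symm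
  have hstep1 : ∫⁻ x in S, h x = (∫⁻ x in S ∩ Set.Iio 0, h x) + ∫⁻ x in S ∩ Set.Ioi 0, h x := by
    conv_lhs => rw [hsplit]
    rw [lintegral_union (hSm.inter measurableSet_Ici)
      (Set.disjoint_of_subset Set.inter_subset_right Set.inter_subset_right
        (Set.Iio_disjoint_Ici le_rfl))]
    rw [setLIntegral_congr hIciIoi]
  -- derivatives and injectivity
  have hd2 : ∀ y ∈ A, HasDerivWithinAt φ₂ (((y + 2) ^ 2)⁻¹) A y := by
    intro y hy
    have hy1 : (-1 : ℝ) ≤ y := hAsub hy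
    have hne : y + 2 ≠ 0 := by intro h'; linarith
    have h1 : HasDerivAt (fun y : ℝ => y + 2) 1 y := (hasDerivAt_id y).add_const 2
    have h2 := (h1.inv hne).neg
    have : -(-1 / (y + 2) ^ 2) = ((y + 2) ^ 2)⁻¹ := by field_simp
    rw [this] at h2
    exact h2.hasDerivWithinAt
  have hd1 : ∀ y ∈ A', HasDerivWithinAt φ₁ (-((y + 1) ^ 2)⁻¹) A' y := by
    intro y hy
    have hy1 : (-1 : ℝ) < y := hy.2
    have hne : y + 1 ≠ 0 := by intro h'; linarith
    have h1 : HasDerivAt (fun y : ℝ => y + 1) 1 y := (hasDerivAt_id y).add_const 1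
    have h2 := h1.inv hne
    have : -1 / (y + 1) ^ 2 = -((y + 1) ^ 2)⁻¹ := by field_simp
    rw [this] at h2
    exact h2.hasDerivWithinAt
  have hinj2 : Set.InjOn φ₂ A := by
    intro a ha b hb hab
    simp only [hφ₂, neg_inj] at hab
    have := inv_injective hab
    linarith
  have hinj1 : Set.InjOn φ₁ A' := by
    intro a ha b hb hab
    simp only [hφ₁] at hab
    have := inv_injective hab
    linarith
  -- change of variables on both branches
  have hcv2 : ∫⁻ x in φ₂ '' A, h x
      = ∫⁻ y in A, ENNReal.ofReal |((y + 2) ^ 2)⁻¹| * h (φ₂ y) :=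
    farey_lintegral_image hA hd2 hinj2 h
  have hcv1 : ∫⁻ x in φ₁ '' A', h x
      = ∫⁻ y in A', ENNReal.ofReal |(-((y + 1) ^ 2)⁻¹)| * h (φ₁ y) :=
    farey_lintegral_image hA'm hd1 hinj1 h
  -- A ae-equals A'
  have hAae : A =ᵐ[volume] A' := by
    have h1 : A = A ∩ Set.Ici (-1 : ℝ) := (Set.inter_eq_left.mpr hAsub).symm
    rw [h1]
    exact MeasureTheory.ae_eq_set_inter (MeasureTheory.ae_eq_refl _) MeasureTheory.Ioi_ae_eq_Ici.symm
  -- measurability of integrands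
  have hmh : Measurable h := by
    apply ENNReal.measurable_ofReal.comp
    exact measurable_const.div ((measurable_id.add_const 1).mul (measurable_id.add_const 2))
  have hg2m : Measurable (fun y : ℝ => ENNReal.ofReal |((y + 2) ^ 2)⁻¹| * h (φ₂ y)) := by
    apply Measurable.mul (f := fun y : ℝ => ENNReal.ofReal |((y + 2) ^ 2)⁻¹|) (g := fun y => h (φ₂ y))
    · exact ENNReal.measurable_ofReal.comp (((measurable_id.add_const 2).pow_const 2).inv.abs)
    · exact hmh.comp ((measurable_id.add_const 2).inv.neg)
  -- assemble
  show (∫⁻ x in S, h x) = ∫⁻ x in A, h x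
  rw [hstep1, hB2, hB1, hcv2, hcv1, setLIntegral_congr hAae, ← lintegral_add_left hg2m,
    setLIntegral_congr hAae]
  apply setLIntegral_congr_fun hA'm
  intro y hy
  have hy1 : (-1 : ℝ) < y := hy.2
  have p1 : (0 : ℝ) < y + 1 := by linarith
  have p2 : (0 : ℝ) < y + 2 := by linarith
  have p3 : (0 : ℝ) < 2 * y + 3 := by linarith
  simp only [hh, hφ₁, hφ₂, abs_neg, abs_of_pos (show (0:ℝ) < ((y+2)^2)⁻¹ by positivity),
    abs_of_pos (show (0:ℝ) < ((y+1)^2)⁻¹ by positivity), Pi.add_apply]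
  rw [← ENNReal.ofReal_mul (by positivity), ← ENNReal.ofReal_mul (by positivity)]
  have e2 : ((y + 2) ^ 2)⁻¹ * (1 / ((-(y + 2)⁻¹ + 1) * (-(y + 2)⁻¹ + 2)))
      = 1 / ((y + 1) * (2 * y + 3)) := by
    rw [show -(y + 2)⁻¹ + 1 = (y + 1) / (y + 2) by field_simp; ring,
      show -(y + 2)⁻¹ + 2 = (2 * y + 3) / (y + 2) by field_simp; ring]
    rw [div_mul_div_comm]
    field_simp
  have e1 : ((y + 1) ^ 2)⁻¹ * (1 / (((y + 1)⁻¹ + 1) * ((y + 1)⁻¹ + 2)))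
      = 1 / ((y + 2) * (2 * y + 3)) := by
    rw [show (y + 1)⁻¹ + 1 = (y + 2) / (y + 1) by field_simp; ring,
      show (y + 1)⁻¹ + 2 = (2 * y + 3) / (y + 1) by field_simp; ring]
    rw [div_mul_div_comm]
    field_simp
  rw [e2, e1, ← ENNReal.ofReal_add (by positivity) (by positivity)]
  congr 1
  rw [div_add_div _ _ (by positivity) (by positivity), div_eq_div_iff (by positivity) (by positivity)]
  ring
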